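/- arXiv:2505.05105 — 7 statements merged into one kernel-verified Lean document; each statement's English description precedes it below -/
import Mathlib

section
/- Let n ≥ 4 be an even integer, λ ∈ ℝ, θ₁ ∈ (0,1], and r_a ∈ ℝ. Define r^λ_h ∈ ℝ^{n+1} by (r^λ_h)_0 = λθ₁r_a, (r^λ_h)_1 = λ(1−θ₁)r_a and (r^λ_h)_k = 0 for 2 ≤ k ≤ n, and define r^λ_{2h} ∈ ℝ^{n/2+1} by (r^λ_{2h})_0 = (λ/2)(1+θ₁)r_a, (r^λ_{2h})_1 = (λ/2)(1−θ₁)r_a and (r^λ_{2h})_k = 0 for 2 ≤ k ≤ n/2. Then 𝓘·r^λ_h = r^λ_{2h}; note that (λ/2)(1+θ₁) = λθ₁' and (λ/2)(1−θ₁) = λ(1−θ₁') where θ₁' = (1+θ₁)/2 is the relative cut length of the coarse boundary cell. -/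
/-- The full-weighting restriction matrix `𝓘 ∈ ℝ^{(n/2+1)×(n+1)}`:
`𝓘_{i,2i} = 1`, `𝓘_{i,2i±1} = 1/2`, all other entries `0`. -/
noncomputable def restrict (n : ℕ) : Matrix (Fin (n / 2 + 1)) (Fin (n + 1)) ℝ := fun i j =>
  if (j : ℕ) = 2 * (i : ℕ) then 1
  else if (j : ℕ) + 1 = 2 * (i : ℕ) ∨ (j : ℕ) = 2 * (i : ℕ) + 1 then 1 / 2
  else 0

/-- The full-weighting restriction of the fine-grid Nitsche-penalty residual vector
`r^λ_h = λ(θ₁ r_a, (1-θ₁) r_a, 0, …, 0)ᵀ` equals the coarse-grid one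
`r^λ_{2h} = (λ/2)((1+θ₁) r_a, (1-θ₁) r_a, 0, …, 0)ᵀ`. -/
theorem restrict_penalty_residual (n : ℕ) (hn : Even n) (hn4 : 4 ≤ n)
    (lam θ₁ : ℝ) (hθ₁ : θ₁ ∈ Set.Ioc (0 : ℝ) 1) (ra : ℝ) :
    (restrict n).mulVec
        (fun k : Fin (n + 1) =>
          if (k : ℕ) = 0 then lam * θ₁ * ra
          else if (k : ℕ) = 1 then lam * (1 - θ₁) * ra else 0)
      = fun k : Fin (n / 2 + 1) =>
          if (k : ℕ) = 0 then (lam / 2) * (1 + θ₁) * ra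
          else if (k : ℕ) = 1 then (lam / 2) * (1 - θ₁) * ra else 0 := by
  funext i
  have h1n : 1 < n + 1 := by omega
  have a0 : Fin (n + 1) := ⟨0, by omega⟩
  set f : Fin (n + 1) → ℝ := fun j =>
    restrict n i j *
      (if (j : ℕ) = 0 then lam * θ₁ * ra
        else if (j : ℕ) = 1 then lam * (1 - θ₁) * ra else 0) with hf
  have hsum : (restrict n).mulVec
        (fun k : Fin (n + 1) =>
          if (k : ℕ) = 0 then lam * θ₁ * ra
          else if (k : ℕ) = 1 then lam * (1 - θ₁) * ra else 0) i
      = f ⟨0, by omega⟩ + f ⟨1, by omega⟩ := by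
    rw [Matrix.mulVec, dotProduct]
    apply Fintype.sum_eq_add
    · intro h; simpa using congrArg Fin.val h
    · intro c ⟨hc0, hc1⟩
      have hc0' : (c : ℕ) ≠ 0 := fun h => hc0 (Fin.ext h)
      have hc1' : (c : ℕ) ≠ 1 := fun h => hc1 (Fin.ext h)
      simp [hf, hc0', hc1']
  rw [hsum]
  rcases Nat.lt_or_ge (i : ℕ) 2 with hi | hi
  · interval_cases h : (i : ℕ)
    · simp [hf, restrict, h]; ring
    · have : 1 ≠ 2 := by omega
      simp [hf, restrict, h]; ring
  · have h0 : (i : ℕ) ≠ 0 := by omega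
    have h1 : (i : ℕ) ≠ 1 := by omega
    have e0 : (0 : ℕ) ≠ 2 * (i : ℕ) := by omega
    have e0' : ¬((0 : ℕ) + 1 = 2 * (i : ℕ) ∨ (0 : ℕ) = 2 * (i : ℕ) + 1) := by omega
    have e1 : (1 : ℕ) ≠ 2 * (i : ℕ) := by omega
    have e1' : ¬((1 : ℕ) + 1 = 2 * (i : ℕ) ∨ (1 : ℕ) = 2 * (i : ℕ) + 1) := by omega
    simp [hf, restrict, h0, h1, e0, e0', e1, e1']
end

section
/- Let n ≥ 4 be an even integer, θ₂ ∈ (0,1], and r_b ∈ ℝ. Define r^N_h ∈ ℝ^{n+1} by (r^N_h)_{n−1} = (1−θ₂)r_b, (r^N_h)_n = θ₂r_b and (r^N_h)_k = 0 for 0 ≤ k ≤ n−2, and define r^N_{2h} ∈ ℝ^{n/2+1} by (r^N_{2h})_{n/2−1} = (1/2)(1−θ₂)r_b, (r^N_{2h})_{n/2} = (1/2)(1+θ₂)r_b and (r^N_{2h})_k = 0 for 0 ≤ k ≤ n/2−2. Then 𝓘·r^N_h = r^N_{2h}; note that (1/2)(1−θ₂) = 1−θ₂' and (1/2)(1+θ₂)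 = θ₂' where θ₂' = (1+θ₂)/2 is the relative cut length of the coarse boundary cell. -/
/-- The full-weighting restriction of the fine-grid Neumann residual vector
`r^N_h = (0, …, 0, (1-θ₂) r_b, θ₂ r_b)ᵀ` equals the coarse-grid one
`r^N_{2h} = (0, …, 0, (1/2)(1-θ₂) r_b, (1/2)(1+θ₂) r_b)ᵀ`. -/
theorem restrict_neumann_residual (n : ℕ) (hn : Even n) (hn4 : 4 ≤ n)
    (θ₂ : ℝ) (hθ₂ : θ₂ ∈ Set.Ioc (0 : ℝ) 1) (rb : ℝ) :
    (restrict n).mulVec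
        (fun k : Fin (n + 1) =>
          if (k : ℕ) = n - 1 then (1 - θ₂) * rb
          else if (k : ℕ) = n then θ₂ * rb else 0)
      = fun k : Fin (n / 2 + 1) =>
          if (k : ℕ) = n / 2 - 1 then (1 / 2) * (1 - θ₂) * rb
          else if (k : ℕ) = n / 2 then (1 / 2) * (1 + θ₂) * rb else 0 := by
  obtain ⟨m, hm⟩ := hn
  have hn2 : n / 2 = m := by omega
  funext i
  have hi : (i : ℕ) ≤ n / 2 := Nat.lt_succ_iff.mp i.isLt
  set a : Fin (n + 1) := ⟨n - 1, by omega⟩ with ha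
  set b : Fin (n + 1) := ⟨n, by omega⟩ with hb
  have hab : a ≠ b := by
    rw [Fin.ne_iff_vne]; show n - 1 ≠ n; omega
  have key : (restrict n).mulVec
        (fun k : Fin (n + 1) =>
          if (k : ℕ) = n - 1 then (1 - θ₂) * rb
          else if (k : ℕ) = n then θ₂ * rb else 0) i
      = restrict n i a * ((1 - θ₂) * rb) + restrict n i b * (θ₂ * rb) := by
    rw [Matrix.mulVec, dotProduct,
      Fintype.sum_eq_add (f := fun j : Fin (n+1) => restrict n i j *
        (if (j : ℕ) = n - 1 then (1 - θ₂) * rb else if (j : ℕ) = n then θ₂ * rb else 0))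
        a b hab ?_]
    · have hav : (a : ℕ) = n - 1 := rfl
      have hbv : (b : ℕ) = n := rfl
      rw [hav, hbv, if_pos rfl, if_neg (by omega), if_pos rfl]
    · intro c hc
      have hca : (c : ℕ) ≠ n - 1 := fun h => hc.1 (Fin.ext h)
      have hcb : (c : ℕ) ≠ n := fun h => hc.2 (Fin.ext h)
      show restrict n i c * (if (c : ℕ) = n - 1 then (1 - θ₂) * rb else if (c : ℕ) = n then θ₂ * rb else 0) = 0
      rw [if_neg hca, if_neg hcb, mul_zero]
  rw [key]
  have hav : (a : ℕ) = n - 1 := rfl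
  have hbv : (b : ℕ) = n := rfl
  have e1 : restrict n i a = if (i : ℕ) = m - 1 ∨ (i : ℕ) = m then 1/2 else 0 := by
    show (if (a : ℕ) = 2 * (i : ℕ) then (1:ℝ)
      else if (a : ℕ) + 1 = 2 * (i : ℕ) ∨ (a : ℕ) = 2 * (i : ℕ) + 1 then 1 / 2 else 0) = _
    rw [hav, if_neg (by omega)]
    by_cases h : (i : ℕ) = m - 1 ∨ (i : ℕ) = m
    · rw [if_pos (by omega), if_pos h]
    · rw [if_neg (by omega), if_neg h]
  have e2 : restrict n i b = if (i : ℕ) = m then 1 else 0 := by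
    show (if (b : ℕ) = 2 * (i : ℕ) then (1:ℝ)
      else if (b : ℕ) + 1 = 2 * (i : ℕ) ∨ (b : ℕ) = 2 * (i : ℕ) + 1 then 1 / 2 else 0) = _
    rw [hbv]
    by_cases h : (i : ℕ) = m
    · rw [if_pos (by omega), if_pos h]
    · rw [if_neg (by omega), if_neg (by omega), if_neg h]
  rw [e1, e2]
  by_cases h1 : (i : ℕ) = m - 1
  · rw [if_pos (Or.inl h1), if_neg (by omega), if_pos (by omega)]
    ring
  · by_cases h2 : (i : ℕ) = m
    · rw [if_pos (Or.inr h2), if_pos h2, if_neg (by omega), if_pos (by omega)]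
      ring
    · rw [if_neg (by tauto), if_neg h2, if_neg (by omega), if_neg (by omega)]
      ring
end

section
/- (Equivalence of the splitting and standard restriction strategies.) Let n ≥ 4 be even, h > 0, θ₁, θ₂ ∈ (0,1], λ ∈ ℝ, g_a, g_b ∈ ℝ, F^I ∈ ℝ^{n+1} and û ∈ ℝ^{n+1}. With the matrices A^I, A^B, A^λ, A^{B,N} ∈ ℝ^{(n+1)×(n+1)} and vectors F^B, F^λ, F^N ∈ ℝ^{n+1} defined in the context, set r_a := g_a − (θ₁û₀ + (1−θ₁)û₁), r_b := g_b − (û_n − û_{n−1})/h, and define the internal residual r^I_h := F^I − (A^I + A^B + A^{B,N})·û. Define the split coarse residual r^{SPLIT}_{2h} := 𝓘·r^I_h + r^B_{2h} + r^λ_{2h} + r^N_{2h}, where r^B_{2h} = (1/(2h))(−r_a, r_a, 0,…,0)ᵀ, r^λ_{2h} = (λ/2)((1+θ₁)r_a, (1−θ₁)r_a, 0,…,0)ᵀ and r^N_{2h} = (1/2)(0,…,0,(1−θ₂)r_b, (1+θ₂)r_b)ᵀ in ℝ^{n/2+1}. Define the standard coarse residual r_{2h} := 𝓘·(F^I + F^B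 + F^λ + F^N − (A^I + A^B + (A^B)ᵀ + A^λ)·û). Then r^{SPLIT}_{2h} = r_{2h}. -/
open Matrix

/-- The internal stiffness matrix `A^I` of the 1D ghost-FEM. -/
noncomputable def AI (n : ℕ) (h θ₁ θ₂ : ℝ) : Matrix (Fin (n + 1)) (Fin (n + 1)) ℝ := fun i j =>
  if (i : ℕ) = 0 ∧ (j : ℕ) = 0 then θ₁ / h
  else if ((i : ℕ) = 0 ∧ (j : ℕ) = 1) ∨ ((i : ℕ) = 1 ∧ (j : ℕ) = 0) then -θ₁ / h
  else if (i : ℕ) = 1 ∧ (j : ℕ) = 1 then (1 + θ₁) / h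
  else if (i : ℕ) = (j : ℕ) ∧ 2 ≤ (i : ℕ) ∧ (i : ℕ) ≤ n - 2 then 2 / h
  else if ((j : ℕ) = (i : ℕ) + 1 ∧ 1 ≤ (i : ℕ) ∧ (i : ℕ) ≤ n - 2) ∨
          ((i : ℕ) = (j : ℕ) + 1 ∧ 1 ≤ (j : ℕ) ∧ (j : ℕ) ≤ n - 2) then -1 / h
  else if (i : ℕ) = n - 1 ∧ (j : ℕ) = n - 1 then (1 + θ₂) / h
  else if ((i : ℕ) = n - 1 ∧ (j : ℕ) = n) ∨ ((i : ℕ) = n ∧ (j : ℕ) = n - 1) then -θ₂ / h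
  else if (i : ℕ) = n ∧ (j : ℕ) = n then θ₂ / h
  else 0

/-- The Nitsche consistency matrix `A^B` of the 1D ghost-FEM. -/
noncomputable def AB (n : ℕ) (h θ₁ : ℝ) : Matrix (Fin (n + 1)) (Fin (n + 1)) ℝ := fun i j =>
  if (i : ℕ) = 0 ∧ (j : ℕ) = 0 then -θ₁ / h
  else if (i : ℕ) = 0 ∧ (j : ℕ) = 1 then θ₁ / h
  else if (i : ℕ) = 1 ∧ (j : ℕ) = 0 then (θ₁ - 1) / h
  else if (i : ℕ) = 1 ∧ (j : ℕ) = 1 then (1 - θ₁) / h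
  else 0

/-- The Nitsche penalty matrix `A^λ` of the 1D ghost-FEM. -/
noncomputable def Alam (n : ℕ) (lam θ₁ : ℝ) : Matrix (Fin (n + 1)) (Fin (n + 1)) ℝ := fun i j =>
  if (i : ℕ) = 0 ∧ (j : ℕ) = 0 then lam * θ₁ ^ 2
  else if ((i : ℕ) = 0 ∧ (j : ℕ) = 1) ∨ ((i : ℕ) = 1 ∧ (j : ℕ) = 0) then lam * θ₁ * (1 - θ₁)
  else if (i : ℕ) = 1 ∧ (j : ℕ) = 1 then lam * (1 - θ₁) ^ 2
  else 0

/-- The Neumann boundary flux matrix `A^{B,N}` of the 1D ghost-FEM. -/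
noncomputable def ABN (n : ℕ) (h θ₂ : ℝ) : Matrix (Fin (n + 1)) (Fin (n + 1)) ℝ := fun i j =>
  if (i : ℕ) = n - 1 ∧ (j : ℕ) = n - 1 then (1 - θ₂) / h
  else if (i : ℕ) = n - 1 ∧ (j : ℕ) = n then (θ₂ - 1) / h
  else if (i : ℕ) = n ∧ (j : ℕ) = n - 1 then θ₂ / h
  else if (i : ℕ) = n ∧ (j : ℕ) = n then -θ₂ / h
  else 0

/-- `F^B = (1/h)(-g_a, g_a, 0, …, 0)ᵀ`. -/
noncomputable def FB (n : ℕ) (h ga : ℝ) : Fin (n + 1) → ℝ := fun k =>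
  if (k : ℕ) = 0 then -ga / h else if (k : ℕ) = 1 then ga / h else 0

/-- `F^λ = λ(θ₁ g_a, (1-θ₁) g_a, 0, …, 0)ᵀ`. -/
noncomputable def Flam (n : ℕ) (lam θ₁ ga : ℝ) : Fin (n + 1) → ℝ := fun k =>
  if (k : ℕ) = 0 then lam * (θ₁ * ga)
  else if (k : ℕ) = 1 then lam * ((1 - θ₁) * ga) else 0

/-- `F^N = (0, …, 0, (1-θ₂) g_b, θ₂ g_b)ᵀ`. -/
noncomputable def FN (n : ℕ) (θ₂ gb : ℝ) : Fin (n + 1) → ℝ := fun k =>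
  if (k : ℕ) = n - 1 then (1 - θ₂) * gb else if (k : ℕ) = n then θ₂ * gb else 0


private lemma sum4 {m : ℕ} (a b c d : Fin m) (hab : a ≠ b) (hac : a ≠ c) (had : a ≠ d)
    (hbc : b ≠ c) (hbd : b ≠ d) (hcd : c ≠ d) (f : Fin m → ℝ)
    (hf : ∀ i, i ≠ a → i ≠ b → i ≠ c → i ≠ d → f i = 0) :
    ∑ i, f i = f a + f b + f c + f d := by
  rw [← Finset.sum_subset (Finset.subset_univ ({a, b, c, d} : Finset (Fin m)))]
  · rw [Finset.sum_insert (by simp [hab, hac, had]),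
      Finset.sum_insert (by simp [hbc, hbd]),
      Finset.sum_insert (by simp [hcd]), Finset.sum_singleton]
    ring
  · intro i _ hi
    simp only [Finset.mem_insert, Finset.mem_singleton, not_or] at hi
    exact hf i hi.1 hi.2.1 hi.2.2.1 hi.2.2.2

set_option maxHeartbeats 4000000 in
/-- Equivalence of the splitting and standard restriction strategies:
`r^{SPLIT}_{2h} = r_{2h} = 𝓘 r_h`. -/
theorem splitting_equals_standard (n : ℕ) (hn : Even n) (hn4 : 4 ≤ n)
    (h θ₁ θ₂ lam ga gb : ℝ) (hh : 0 < h)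
    (hθ₁ : θ₁ ∈ Set.Ioc (0 : ℝ) 1) (hθ₂ : θ₂ ∈ Set.Ioc (0 : ℝ) 1)
    (FI u : Fin (n + 1) → ℝ) :
    let ra : ℝ := ga - (θ₁ * u ⟨0, by omega⟩ + (1 - θ₁) * u ⟨1, by omega⟩)
    let rb : ℝ := gb - (u ⟨n, by omega⟩ - u ⟨n - 1, by omega⟩) / h
    let rI : Fin (n + 1) → ℝ := FI - (AI n h θ₁ θ₂ + AB n h θ₁ + ABN n h θ₂).mulVec u
    let rB2h : Fin (n / 2 + 1) → ℝ := fun k =>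
      if (k : ℕ) = 0 then -ra / (2 * h) else if (k : ℕ) = 1 then ra / (2 * h) else 0
    let rlam2h : Fin (n / 2 + 1) → ℝ := fun k =>
      if (k : ℕ) = 0 then (lam / 2) * ((1 + θ₁) * ra)
      else if (k : ℕ) = 1 then (lam / 2) * ((1 - θ₁) * ra) else 0
    let rN2h : Fin (n / 2 + 1) → ℝ := fun k =>
      if (k : ℕ) = n / 2 - 1 then (1 / 2) * ((1 - θ₂) * rb)
      else if (k : ℕ) = n / 2 then (1 / 2) * ((1 + θ₂) * rb) else 0
    (restrict n).mulVec rI + rB2h + rlam2h + rN2h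
      = (restrict n).mulVec
          (FI + FB n h ga + Flam n lam θ₁ ga + FN n θ₂ gb
            - (AI n h θ₁ θ₂ + AB n h θ₁ + (AB n h θ₁)ᵀ + Alam n lam θ₁).mulVec u) := by
  intro ra rb rI rB2h rlam2h rN2h
  have hne : n % 2 = 0 := Nat.even_iff.mp hn
  have hh' : h ≠ 0 := ne_of_gt hh
  set j0 : Fin (n + 1) := ⟨0, by omega⟩ with hj0d
  set j1 : Fin (n + 1) := ⟨1, by omega⟩ with hj1d
  set jm : Fin (n + 1) := ⟨n - 1, by omega⟩ with hjmd
  set jn : Fin (n + 1) := ⟨n, by omega⟩ with hjnd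
  have d01 : j0 ≠ j1 := by simp [hj0d, hj1d, Fin.ext_iff]
  have d0m : j0 ≠ jm := by simp [hj0d, hjmd, Fin.ext_iff]; omega
  have d0n : j0 ≠ jn := by simp [hj0d, hjnd, Fin.ext_iff]; omega
  have d1m : j1 ≠ jm := by simp [hj1d, hjmd, Fin.ext_iff]; omega
  have d1n : j1 ≠ jn := by simp [hj1d, hjnd, Fin.ext_iff]; omega
  have dmn : jm ≠ jn := by simp [hjmd, hjnd, Fin.ext_iff]; omega
  -- numeric facts used to evaluate matrix entries
  have f1 : ¬(n - 1 = 0) := by omega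
  have f2 : ¬(n - 1 = 1) := by omega
  have f3 : ¬(n = 0) := by omega
  have f4 : ¬(n = 1) := by omega
  have f5 : ¬(n = n - 1) := by omega
  have f6 : ¬(n - 1 = n) := by omega
  have f7 : ¬((0 : ℕ) = n - 1) := by omega
  have f8 : ¬((0 : ℕ) = n) := by omega
  have f9 : ¬((1 : ℕ) = n - 1) := by omega
  have f10 : ¬((1 : ℕ) = n) := by omega
  obtain ⟨NN, hNNd⟩ : ∃ M : Matrix (Fin (n + 1)) (Fin (n + 1)) ℝ,
      M = (AB n h θ₁)ᵀ + Alam n lam θ₁ - ABN n h θ₂ := ⟨_, rfl⟩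
  obtain ⟨vv, hvvd⟩ : ∃ v : Fin (n + 1) → ℝ,
      v = fun j => FB n h ga j + Flam n lam θ₁ ga j + FN n θ₂ gb j - NN.mulVec u j :=
    ⟨_, rfl⟩
  -- zero entries of NN.mulVec u off the support
  have hNs : ∀ j : Fin (n + 1), NN.mulVec u j =
      NN j j0 * u j0 + NN j j1 * u j1 + NN j jm * u jm + NN j jn * u jn := by
    intro j
    simp only [Matrix.mulVec, dotProduct]
    refine sum4 j0 j1 jm jn d01 d0m d0n d1m d1n dmn _ (fun i e0 e1 em en => ?_)
    have g0 : (i : ℕ) ≠ 0 := fun hx => e0 (Fin.ext hx)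
    have g1 : (i : ℕ) ≠ 1 := fun hx => e1 (Fin.ext hx)
    have gm : (i : ℕ) ≠ n - 1 := fun hx => em (Fin.ext hx)
    have gn : (i : ℕ) ≠ n := fun hx => en (Fin.ext hx)
    simp [hNNd, AB, Alam, ABN, Matrix.transpose_apply, g0, g1, gm, gn]
  have hvz : ∀ j : Fin (n + 1), j ≠ j0 → j ≠ j1 → j ≠ jm → j ≠ jn → vv j = 0 := by
    intro j e0 e1 em en
    have g0 : (j : ℕ) ≠ 0 := fun hx => e0 (Fin.ext hx)
    have g1 : (j : ℕ) ≠ 1 := fun hx => e1 (Fin.ext hx)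
    have gm : (j : ℕ) ≠ n - 1 := fun hx => em (Fin.ext hx)
    have gn : (j : ℕ) ≠ n := fun hx => en (Fin.ext hx)
    simp only [hvvd]
    rw [hNs j]
    simp [hNNd, FB, Flam, FN, AB, Alam, ABN, Matrix.transpose_apply, g0, g1, gm, gn]
  -- values of vv on the support
  have hv0 : vv j0 = -ra / h + lam * (θ₁ * ra) := by
    simp only [hvvd]
    rw [hNs j0]
    simp [hNNd, FB, Flam, FN, AB, Alam, ABN, Matrix.transpose_apply,
      hj0d, hj1d, hjmd, hjnd, f1, f2, f3, f4, f5, f6, f7, f8, f9, f10]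
    unfold ra
    simp only [Fin.mk_zero, Fin.mk_one]
    field_simp
    ring
  have hv1 : vv j1 = ra / h + lam * ((1 - θ₁) * ra) := by
    simp only [hvvd]
    rw [hNs j1]
    simp [hNNd, FB, Flam, FN, AB, Alam, ABN, Matrix.transpose_apply,
      hj0d, hj1d, hjmd, hjnd, f1, f2, f3, f4, f5, f6, f7, f8, f9, f10]
    unfold ra
    simp only [Fin.mk_zero, Fin.mk_one]
    field_simp
  have hvm : vv jm = (1 - θ₂) * rb := by
    simp only [hvvd]
    rw [hNs jm]
    simp [hNNd, FB, Flam, FN, AB, Alam, ABN, Matrix.transpose_apply,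
      hj0d, hj1d, hjmd, hjnd, f1, f2, f3, f4, f5, f6, f7, f8, f9, f10]
    unfold rb
    try simp only [Fin.mk_zero, Fin.mk_one, or_false, false_or]
    field_simp
    ring
  have hvn : vv jn = θ₂ * rb := by
    simp only [hvvd]
    rw [hNs jn]
    simp [hNNd, FB, Flam, FN, AB, Alam, ABN, Matrix.transpose_apply,
      hj0d, hj1d, hjmd, hjnd, f1, f2, f3, f4, f5, f6, f7, f8, f9, f10]
    unfold rb
    try simp only [Fin.mk_zero, Fin.mk_one, or_false, false_or]
    field_simp
    ring
  -- decomposition of the right-hand-side vector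
  have hvec : (FI + FB n h ga + Flam n lam θ₁ ga + FN n θ₂ gb
      - (AI n h θ₁ θ₂ + AB n h θ₁ + (AB n h θ₁)ᵀ + Alam n lam θ₁).mulVec u)
      = rI + vv := by
    funext j
    unfold rI
    simp only [hvvd, hNNd, Pi.add_apply, Pi.sub_apply, Matrix.add_mulVec,
      Matrix.sub_mulVec]
    ring
  rw [hvec, Matrix.mulVec_add]
  funext k
  have key : rB2h k + rlam2h k + rN2h k = (restrict n).mulVec vv k := by
    have hs : (restrict n).mulVec vv k =
        restrict n k j0 * vv j0 + restrict n k j1 * vv j1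
          + restrict n k jm * vv jm + restrict n k jn * vv jn := by
      simp only [Matrix.mulVec, dotProduct]
      exact sum4 j0 j1 jm jn d01 d0m d0n d1m d1n dmn _
        (fun j e0 e1 em en => by rw [hvz j e0 e1 em en, mul_zero])
    rw [hs, hv0, hv1, hvm, hvn]
    unfold rB2h rlam2h rN2h
    simp only [restrict, hj0d, hj1d, hjmd, hjnd, or_false, false_or]
    unfold ra rb
    try simp only [Fin.mk_zero, Fin.mk_one, or_false, false_or]
    split_ifs <;> first
      | omega
      | (have h'' : _ ∨ False := ‹_›; rcases h'' with h' | h'; omega; exact h'.elim)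
      | (field_simp <;> ring)
  simp only [Pi.add_apply]
  linarith [key]
end

section
/- (Galerkin coarse-grid operator equals the directly assembled coarse operator in 1D.) For even n, h > 0, θ₁, θ₂ ∈ (0,1] and λ ∈ ℝ, let A(n, h, θ₁, θ₂, λ) := A^I + A^B + (A^B)ᵀ + A^λ ∈ ℝ^{(n+1)×(n+1)} be the 1D ghost-FEM matrix defined in the context. Then for every even integer n ≥ 8, 𝓘 · A(n, h, θ₁, θ₂, λ) · 𝓘ᵀ = A(n/2, 2h, (1+θ₁)/2, (1+θ₂)/2, λ), i.e. the Galerkin coarse operator obtained from the full-weighting restriction 𝓘 and its transpose coincides with the ghost-FEM matrix assembled directly on the coarse grid of step 2h with cut fractions θ₁' = (1+θ₁)/2, θ₂' = (1+θ₂)/2 and the same stabilization parameter λ. -/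
open Matrix

noncomputable def AIe (n : ℕ) (h θ₁ θ₂ : ℝ) (i j : ℕ) : ℝ :=
  if i = 0 ∧ j = 0 then θ₁ / h
  else if (i = 0 ∧ j = 1) ∨ (i = 1 ∧ j = 0) then -θ₁ / h
  else if i = 1 ∧ j = 1 then (1 + θ₁) / h
  else if i = j ∧ 2 ≤ i ∧ i ≤ n - 2 then 2 / h
  else if (j = i + 1 ∧ 1 ≤ i ∧ i ≤ n - 2) ∨ (i = j + 1 ∧ 1 ≤ j ∧ j ≤ n - 2) then -1 / h
  else if i = n - 1 ∧ j = n - 1 then (1 + θ₂) / h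
  else if (i = n - 1 ∧ j = n) ∨ (i = n ∧ j = n - 1) then -θ₂ / h
  else if i = n ∧ j = n then θ₂ / h
  else 0

noncomputable def ABe (n : ℕ) (h θ₁ : ℝ) (i j : ℕ) : ℝ :=
  if i = 0 ∧ j = 0 then -θ₁ / h
  else if i = 0 ∧ j = 1 then θ₁ / h
  else if i = 1 ∧ j = 0 then (θ₁ - 1) / h
  else if i = 1 ∧ j = 1 then (1 - θ₁) / h
  else 0

noncomputable def Alame (n : ℕ) (lam θ₁ : ℝ) (i j : ℕ) : ℝ :=
  if i = 0 ∧ j = 0 then lam * θ₁ ^ 2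
  else if (i = 0 ∧ j = 1) ∨ (i = 1 ∧ j = 0) then lam * θ₁ * (1 - θ₁)
  else if i = 1 ∧ j = 1 then lam * (1 - θ₁) ^ 2
  else 0

noncomputable def Ae (n : ℕ) (h θ₁ θ₂ lam : ℝ) (i j : ℕ) : ℝ :=
  AIe n h θ₁ θ₂ i j + ABe n h θ₁ i j + ABe n h θ₁ j i + Alame n lam θ₁ i j

-- AIe lemmas
lemma AIe_far (n : ℕ) (h θ₁ θ₂ : ℝ) (i j : ℕ) (hf : i + 2 ≤ j ∨ j + 2 ≤ i) :
    AIe n h θ₁ θ₂ i j = 0 := by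
  unfold AIe; split_ifs <;> first | rfl | omega | tauto

lemma AIe_00 (n : ℕ) (h θ₁ θ₂ : ℝ) : AIe n h θ₁ θ₂ 0 0 = θ₁ / h := by
  unfold AIe; split_ifs <;> first | rfl | omega | tauto

lemma AIe_01 (n : ℕ) (h θ₁ θ₂ : ℝ) : AIe n h θ₁ θ₂ 0 1 = -θ₁ / h := by
  unfold AIe; split_ifs <;> first | rfl | omega | tauto

lemma AIe_10 (n : ℕ) (h θ₁ θ₂ : ℝ) : AIe n h θ₁ θ₂ 1 0 = -θ₁ / h := by
  unfold AIe; split_ifs <;> first | rfl | omega | tauto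

lemma AIe_11 (n : ℕ) (h θ₁ θ₂ : ℝ) : AIe n h θ₁ θ₂ 1 1 = (1 + θ₁) / h := by
  unfold AIe; split_ifs <;> first | rfl | omega | tauto

lemma AIe_diag (n : ℕ) (h θ₁ θ₂ : ℝ) (i j : ℕ) (h2 : 2 ≤ i) (hin : i + 2 ≤ n) (hj : j = i) :
    AIe n h θ₁ θ₂ i j = 2 / h := by
  unfold AIe; split_ifs <;> first | rfl | omega | tauto

lemma AIe_off1 (n : ℕ) (h θ₁ θ₂ : ℝ) (i j : ℕ) (h1 : 1 ≤ i) (hin : i + 2 ≤ n) (hj : j = i + 1) :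
    AIe n h θ₁ θ₂ i j = -1 / h := by
  unfold AIe; split_ifs <;> first | rfl | omega | tauto

lemma AIe_off2 (n : ℕ) (h θ₁ θ₂ : ℝ) (i j : ℕ) (h1 : 1 ≤ j) (hjn : j + 2 ≤ n) (hi : i = j + 1) :
    AIe n h θ₁ θ₂ i j = -1 / h := by
  unfold AIe; split_ifs <;> first | rfl | omega | tauto

lemma AIe_mm (n : ℕ) (h θ₁ θ₂ : ℝ) (i j : ℕ) (hn : 4 ≤ n) (hi : i + 1 = n) (hj : j = i) :
    AIe n h θ₁ θ₂ i j = (1 + θ₂) / h := by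
  unfold AIe; split_ifs <;> first | rfl | omega | tauto

lemma AIe_mn (n : ℕ) (h θ₁ θ₂ : ℝ) (i j : ℕ) (hn : 4 ≤ n) (hi : i + 1 = n) (hj : j = n) :
    AIe n h θ₁ θ₂ i j = -θ₂ / h := by
  unfold AIe; split_ifs <;> first | rfl | omega | tauto

lemma AIe_nm (n : ℕ) (h θ₁ θ₂ : ℝ) (i j : ℕ) (hn : 4 ≤ n) (hi : i = n) (hj : j + 1 = n) :
    AIe n h θ₁ θ₂ i j = -θ₂ / h := by
  unfold AIe; split_ifs <;> first | rfl | omega | tauto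

lemma AIe_nn (n : ℕ) (h θ₁ θ₂ : ℝ) (i j : ℕ) (hn : 4 ≤ n) (hi : i = n) (hj : j = n) :
    AIe n h θ₁ θ₂ i j = θ₂ / h := by
  unfold AIe; split_ifs <;> first | rfl | omega | tauto

-- ABe lemmas
lemma ABe_00 (n : ℕ) (h θ₁ : ℝ) : ABe n h θ₁ 0 0 = -θ₁ / h := by
  unfold ABe; split_ifs <;> first | rfl | omega | tauto

lemma ABe_01 (n : ℕ) (h θ₁ : ℝ) : ABe n h θ₁ 0 1 = θ₁ / h := by
  unfold ABe; split_ifs <;> first | rfl | omega | tauto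

lemma ABe_10 (n : ℕ) (h θ₁ : ℝ) : ABe n h θ₁ 1 0 = (θ₁ - 1) / h := by
  unfold ABe; split_ifs <;> first | rfl | omega | tauto

lemma ABe_11 (n : ℕ) (h θ₁ : ℝ) : ABe n h θ₁ 1 1 = (1 - θ₁) / h := by
  unfold ABe; split_ifs <;> first | rfl | omega | tauto

lemma ABe_zero (n : ℕ) (h θ₁ : ℝ) (i j : ℕ) (hf : 2 ≤ i ∨ 2 ≤ j) : ABe n h θ₁ i j = 0 := by
  unfold ABe; split_ifs <;> first | rfl | omega | tauto

-- Alame lemmas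
lemma Alame_00 (n : ℕ) (lam θ₁ : ℝ) : Alame n lam θ₁ 0 0 = lam * θ₁ ^ 2 := by
  unfold Alame; split_ifs <;> first | rfl | omega | tauto

lemma Alame_01 (n : ℕ) (lam θ₁ : ℝ) : Alame n lam θ₁ 0 1 = lam * θ₁ * (1 - θ₁) := by
  unfold Alame; split_ifs <;> first | rfl | omega | tauto

lemma Alame_10 (n : ℕ) (lam θ₁ : ℝ) : Alame n lam θ₁ 1 0 = lam * θ₁ * (1 - θ₁) := by
  unfold Alame; split_ifs <;> first | rfl | omega | tauto

lemma Alame_11 (n : ℕ) (lam θ₁ : ℝ) : Alame n lam θ₁ 1 1 = lam * (1 - θ₁) ^ 2 := by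
  unfold Alame; split_ifs <;> first | rfl | omega | tauto

lemma Alame_zero (n : ℕ) (lam θ₁ : ℝ) (i j : ℕ) (hf : 2 ≤ i ∨ 2 ≤ j) : Alame n lam θ₁ i j = 0 := by
  unfold Alame; split_ifs <;> first | rfl | omega | tauto

noncomputable def Gz (n : ℕ) (h θ₁ θ₂ lam : ℝ) (x y : ℕ) : ℝ :=
  if x ≤ n ∧ y ≤ n then Ae n h θ₁ θ₂ lam x y else 0

lemma Gz_big (n : ℕ) (h θ₁ θ₂ lam : ℝ) (i j : ℕ) (hf : n < i ∨ n < j) :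
    Gz n h θ₁ θ₂ lam i j = 0 := by
  unfold Gz; rw [if_neg (by omega)]

lemma Gz_far (n : ℕ) (h θ₁ θ₂ lam : ℝ) (i j : ℕ) (hf : i + 2 ≤ j ∨ j + 2 ≤ i) :
    Gz n h θ₁ θ₂ lam i j = 0 := by
  unfold Gz Ae
  rw [AIe_far n h θ₁ θ₂ i j (by omega), ABe_zero n h θ₁ i j (by omega),
      ABe_zero n h θ₁ j i (by omega), Alame_zero n lam θ₁ i j (by omega)]
  split_ifs <;> norm_num

lemma Gz_00 (n : ℕ) (h θ₁ θ₂ lam : ℝ) :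
    Gz n h θ₁ θ₂ lam 0 0 = -(θ₁ / h) + lam * θ₁ ^ 2 := by
  unfold Gz Ae
  rw [if_pos (by omega : (0:ℕ) ≤ n ∧ (0:ℕ) ≤ n), AIe_00, ABe_00, Alame_00]
  ring

lemma Gz_01 (n : ℕ) (h θ₁ θ₂ lam : ℝ) (hn : 1 ≤ n) :
    Gz n h θ₁ θ₂ lam 0 1 = (θ₁ - 1) / h + lam * (θ₁ * (1 - θ₁)) := by
  unfold Gz Ae
  rw [if_pos (by omega : (0:ℕ) ≤ n ∧ (1:ℕ) ≤ n), AIe_01, ABe_01, ABe_10, Alame_01]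
  ring

lemma Gz_10 (n : ℕ) (h θ₁ θ₂ lam : ℝ) (hn : 1 ≤ n) :
    Gz n h θ₁ θ₂ lam 1 0 = (θ₁ - 1) / h + lam * (θ₁ * (1 - θ₁)) := by
  unfold Gz Ae
  rw [if_pos (by omega : (1:ℕ) ≤ n ∧ (0:ℕ) ≤ n), AIe_10, ABe_10, ABe_01, Alame_10]
  ring

lemma Gz_11 (n : ℕ) (h θ₁ θ₂ lam : ℝ) (hn : 1 ≤ n) :
    Gz n h θ₁ θ₂ lam 1 1 = (3 - θ₁) / h + lam * (1 - θ₁) ^ 2 := by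
  unfold Gz Ae
  rw [if_pos (by omega : (1:ℕ) ≤ n ∧ (1:ℕ) ≤ n), AIe_11, ABe_11, Alame_11]
  ring

lemma Gz_diag (n : ℕ) (h θ₁ θ₂ lam : ℝ) (i j : ℕ) (h2 : 2 ≤ i) (hin : i + 2 ≤ n) (hj : j = i) :
    Gz n h θ₁ θ₂ lam i j = 2 / h := by
  unfold Gz Ae
  rw [if_pos (by omega : i ≤ n ∧ j ≤ n), AIe_diag n h θ₁ θ₂ i j h2 hin hj,
      ABe_zero n h θ₁ i j (by omega), ABe_zero n h θ₁ j i (by omega),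
      Alame_zero n lam θ₁ i j (by omega)]
  ring

lemma Gz_off1 (n : ℕ) (h θ₁ θ₂ lam : ℝ) (i j : ℕ) (h1 : 1 ≤ i) (hin : i + 2 ≤ n)
    (hj : j = i + 1) : Gz n h θ₁ θ₂ lam i j = -1 / h := by
  unfold Gz Ae
  rw [if_pos (by omega : i ≤ n ∧ j ≤ n), AIe_off1 n h θ₁ θ₂ i j h1 hin hj,
      ABe_zero n h θ₁ i j (by omega), ABe_zero n h θ₁ j i (by omega),
      Alame_zero n lam θ₁ i j (by omega)]
  ring

lemma Gz_off2 (n : ℕ) (h θ₁ θ₂ lam : ℝ) (i j : ℕ) (h1 : 1 ≤ j) (hjn : j + 2 ≤ n)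
    (hi : i = j + 1) : Gz n h θ₁ θ₂ lam i j = -1 / h := by
  unfold Gz Ae
  rw [if_pos (by omega : i ≤ n ∧ j ≤ n), AIe_off2 n h θ₁ θ₂ i j h1 hjn hi,
      ABe_zero n h θ₁ i j (by omega), ABe_zero n h θ₁ j i (by omega),
      Alame_zero n lam θ₁ i j (by omega)]
  ring

lemma Gz_mm (n : ℕ) (h θ₁ θ₂ lam : ℝ) (i j : ℕ) (hn : 4 ≤ n) (hi : i + 1 = n) (hj : j = i) :
    Gz n h θ₁ θ₂ lam i j = (1 + θ₂) / h := by
  unfold Gz Ae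
  rw [if_pos (by omega : i ≤ n ∧ j ≤ n), AIe_mm n h θ₁ θ₂ i j hn hi hj,
      ABe_zero n h θ₁ i j (by omega), ABe_zero n h θ₁ j i (by omega),
      Alame_zero n lam θ₁ i j (by omega)]
  ring

lemma Gz_mn (n : ℕ) (h θ₁ θ₂ lam : ℝ) (i j : ℕ) (hn : 4 ≤ n) (hi : i + 1 = n) (hj : j = n) :
    Gz n h θ₁ θ₂ lam i j = -θ₂ / h := by
  unfold Gz Ae
  rw [if_pos (by omega : i ≤ n ∧ j ≤ n), AIe_mn n h θ₁ θ₂ i j hn hi hj,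
      ABe_zero n h θ₁ i j (by omega), ABe_zero n h θ₁ j i (by omega),
      Alame_zero n lam θ₁ i j (by omega)]
  ring

lemma Gz_nm (n : ℕ) (h θ₁ θ₂ lam : ℝ) (i j : ℕ) (hn : 4 ≤ n) (hi : i = n) (hj : j + 1 = n) :
    Gz n h θ₁ θ₂ lam i j = -θ₂ / h := by
  unfold Gz Ae
  rw [if_pos (by omega : i ≤ n ∧ j ≤ n), AIe_nm n h θ₁ θ₂ i j hn hi hj,
      ABe_zero n h θ₁ i j (by omega), ABe_zero n h θ₁ j i (by omega),
      Alame_zero n lam θ₁ i j (by omega)]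
  ring

lemma Gz_nn (n : ℕ) (h θ₁ θ₂ lam : ℝ) (i j : ℕ) (hn : 4 ≤ n) (hi : i = n) (hj : j = n) :
    Gz n h θ₁ θ₂ lam i j = θ₂ / h := by
  unfold Gz Ae
  rw [if_pos (by omega : i ≤ n ∧ j ≤ n), AIe_nn n h θ₁ θ₂ i j hn hi hj,
      ABe_zero n h θ₁ i j (by omega), ABe_zero n h θ₁ j i (by omega),
      Alame_zero n lam θ₁ i j (by omega)]
  ring

noncomputable def Phi (kn : ℕ) (h θ₁ θ₂ lam : ℝ) (b x : ℕ) : ℝ :=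
  (if 0 < b then (1 / 2 : ℝ) * Gz kn h θ₁ θ₂ lam x (2 * b - 1) else 0)
    + Gz kn h θ₁ θ₂ lam x (2 * b) + (1 / 2 : ℝ) * Gz kn h θ₁ θ₂ lam x (2 * b + 1)

lemma Phi_big (kn : ℕ) (h θ₁ θ₂ lam : ℝ) (b x : ℕ) (hx : kn < x) :
    Phi kn h θ₁ θ₂ lam b x = 0 := by
  unfold Phi
  rw [Gz_big kn h θ₁ θ₂ lam x (2*b-1) (Or.inl hx), Gz_big kn h θ₁ θ₂ lam x (2*b) (Or.inl hx),
      Gz_big kn h θ₁ θ₂ lam x (2*b+1) (Or.inl hx)]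
  simp

lemma Phi_far (kn : ℕ) (h θ₁ θ₂ lam : ℝ) (b x : ℕ) (hf : x + 3 ≤ 2 * b ∨ 2 * b + 3 ≤ x) :
    Phi kn h θ₁ θ₂ lam b x = 0 := by
  unfold Phi
  rw [Gz_far kn h θ₁ θ₂ lam x (2*b-1) (by omega), Gz_far kn h θ₁ θ₂ lam x (2*b) (by omega),
      Gz_far kn h θ₁ θ₂ lam x (2*b+1) (by omega)]
  simp

lemma sum_ind (n t : ℕ) (c : ℝ) (f : Fin (n + 1) → ℝ) (F : ℕ → ℝ)
    (hF : ∀ j : Fin (n + 1), F j = f j) (hF0 : ∀ s, n < s → F s = 0) :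
    (∑ j : Fin (n + 1), (if (j : ℕ) = t then c else 0) * f j) = c * F t := by
  by_cases ht : t ≤ n
  · rw [Finset.sum_eq_single (⟨t, by omega⟩ : Fin (n + 1))]
    · rw [if_pos rfl, hF ⟨t, by omega⟩]
    · intro b _ hb
      rw [if_neg (fun hbt => hb (Fin.ext hbt)), zero_mul]
    · intro hmem; exact absurd (Finset.mem_univ _) hmem
  · rw [Finset.sum_congr rfl (fun j _ => by
        have := j.isLt
        rw [if_neg (by omega), zero_mul]), Finset.sum_const_zero, hF0 t (by omega), mul_zero]

lemma sum_restrict (n : ℕ) (i : Fin (n / 2 + 1)) (f : Fin (n + 1) → ℝ) (F : ℕ → ℝ)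
    (hF : ∀ j : Fin (n + 1), F j = f j) (hF0 : ∀ s, n < s → F s = 0) :
    (∑ j : Fin (n + 1), restrict n i j * f j)
      = (if 0 < (i : ℕ) then (1 / 2 : ℝ) * F (2 * (i : ℕ) - 1) else 0)
        + F (2 * (i : ℕ)) + (1 / 2 : ℝ) * F (2 * (i : ℕ) + 1) := by
  have hsplit : ∀ j : Fin (n + 1), restrict n i j
      = (if (j : ℕ) = 2 * (i : ℕ) then (1 : ℝ) else 0)
        + ((if (j : ℕ) + 1 = 2 * (i : ℕ) then (1 / 2 : ℝ) else 0)
        + (if (j : ℕ) = 2 * (i : ℕ) + 1 then (1 / 2 : ℝ) else 0)) := by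
    intro j; unfold restrict; split_ifs <;> first | omega | norm_num
  calc (∑ j : Fin (n+1), restrict n i j * f j)
      = ∑ j : Fin (n+1), ((if (j:ℕ) = 2*(i:ℕ) then (1:ℝ) else 0) * f j
          + ((if (j:ℕ)+1 = 2*(i:ℕ) then (1/2:ℝ) else 0) * f j
          + (if (j:ℕ) = 2*(i:ℕ)+1 then (1/2:ℝ) else 0) * f j)) := by
        refine Finset.sum_congr rfl fun j _ => ?_
        rw [hsplit j]; ring
    _ = _ := by
        rw [Finset.sum_add_distrib, Finset.sum_add_distrib,
            sum_ind n (2*(i:ℕ)) 1 f F hF hF0, sum_ind n (2*(i:ℕ)+1) (1/2) f F hF hF0]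
        by_cases hi : 0 < (i:ℕ)
        · rw [Finset.sum_congr rfl (fun j _ => by
              rw [show (if (j:ℕ)+1 = 2*(i:ℕ) then (1/2:ℝ) else 0)
                  = (if (j:ℕ) = 2*(i:ℕ) - 1 then (1/2:ℝ) else 0) from by
                split_ifs <;> first | rfl | omega]),
            sum_ind n (2*(i:ℕ)-1) (1/2) f F hF hF0, if_pos hi]
          ring
        · rw [Finset.sum_congr rfl (fun j _ => by
              rw [if_neg (show ¬((j:ℕ)+1 = 2*(i:ℕ)) by omega), zero_mul]),
            Finset.sum_const_zero, if_neg hi]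
          ring

set_option maxHeartbeats 1000000 in
lemma core (kn k : ℕ) (hkn : kn = 2 * k) (hk : 4 ≤ k) (h θ₁ θ₂ lam : ℝ) (hne : h ≠ 0)
    (a b : ℕ) (ha : a ≤ k) (hb : b ≤ k) :
    (if 0 < a then (1 / 2 : ℝ) * Phi kn h θ₁ θ₂ lam b (2 * a - 1) else 0)
      + Phi kn h θ₁ θ₂ lam b (2 * a)
      + (1 / 2 : ℝ) * Phi kn h θ₁ θ₂ lam b (2 * a + 1)
    = Ae k (2 * h) ((1 + θ₁) / 2) ((1 + θ₂) / 2) lam a b := by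
  subst hkn
  by_cases hfar : a + 2 ≤ b ∨ b + 2 ≤ a
  · rw [Phi_far (2*k) h θ₁ θ₂ lam b (2*a-1) (by omega),
        Phi_far (2*k) h θ₁ θ₂ lam b (2*a) (by omega),
        Phi_far (2*k) h θ₁ θ₂ lam b (2*a+1) (by omega)]
    unfold Ae
    rw [AIe_far k (2*h) ((1+θ₁)/2) ((1+θ₂)/2) a b (by omega),
        ABe_zero k (2*h) ((1+θ₁)/2) a b (by omega),
        ABe_zero k (2*h) ((1+θ₁)/2) b a (by omega),
        Alame_zero k lam ((1+θ₁)/2) a b (by omega)]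
    split_ifs <;> norm_num
  · have hcase : (a = 0 ∧ b = 0) ∨ (a = 0 ∧ b = 1) ∨ (a = 1 ∧ b = 0) ∨ (a = 1 ∧ b = 1) ∨
        (a = 1 ∧ b = 2) ∨ (a = 2 ∧ b = 1) ∨ (b = a ∧ 2 ≤ a ∧ a + 2 ≤ k) ∨
        (b = a + 1 ∧ 2 ≤ a ∧ a + 2 ≤ k) ∨ (a = b + 1 ∧ 2 ≤ b ∧ b + 2 ≤ k) ∨
        (a + 1 = k ∧ b + 1 = k) ∨ (a + 1 = k ∧ b = k) ∨ (a = k ∧ b + 1 = k) ∨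
        (a = k ∧ b = k) := by omega
    rcases hcase with ⟨rfl, rfl⟩ | ⟨rfl, rfl⟩ | ⟨rfl, rfl⟩ | ⟨rfl, rfl⟩ | ⟨rfl, rfl⟩ |
      ⟨rfl, rfl⟩ | ⟨hba, h2, h3⟩ | ⟨hba, h2, h3⟩ | ⟨hab, h2, h3⟩ | ⟨h10a, h10b⟩ |
      ⟨h11, hb11⟩ | ⟨ha12, h12⟩ | ⟨ha13, hb13⟩
    -- case 1 : a = 0, b = 0
    · norm_num [Phi]
      rw [Gz_00 (2*k) h θ₁ θ₂ lam,
          Gz_01 (2*k) h θ₁ θ₂ lam (by omega),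
          Gz_10 (2*k) h θ₁ θ₂ lam (by omega),
          Gz_11 (2*k) h θ₁ θ₂ lam (by omega)]
      unfold Ae
      rw [AIe_00 k (2*h) ((1+θ₁)/2) ((1+θ₂)/2),
          ABe_00 k (2*h) ((1+θ₁)/2),
          Alame_00 k lam ((1+θ₁)/2)]
      field_simp
      try ring
    -- case 2 : a = 0, b = 1
    · norm_num [Phi]
      rw [Gz_01 (2*k) h θ₁ θ₂ lam (by omega),
          Gz_far (2*k) h θ₁ θ₂ lam 0 2 (by omega),
          Gz_far (2*k) h θ₁ θ₂ lam 0 3 (by omega),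
          Gz_11 (2*k) h θ₁ θ₂ lam (by omega),
          Gz_off1 (2*k) h θ₁ θ₂ lam 1 2 (by omega) (by omega) (by omega),
          Gz_far (2*k) h θ₁ θ₂ lam 1 3 (by omega)]
      unfold Ae
      rw [AIe_01 k (2*h) ((1+θ₁)/2) ((1+θ₂)/2),
          ABe_01 k (2*h) ((1+θ₁)/2),
          ABe_10 k (2*h) ((1+θ₁)/2),
          Alame_01 k lam ((1+θ₁)/2)]
      field_simp
      try ring
    -- case 3 : a = 1, b = 0
    · norm_num [Phi]
      rw [Gz_10 (2*k) h θ₁ θ₂ lam (by omega),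
          Gz_11 (2*k) h θ₁ θ₂ lam (by omega),
          Gz_far (2*k) h θ₁ θ₂ lam 2 0 (by omega),
          Gz_off2 (2*k) h θ₁ θ₂ lam 2 1 (by omega) (by omega) (by omega),
          Gz_far (2*k) h θ₁ θ₂ lam 3 0 (by omega),
          Gz_far (2*k) h θ₁ θ₂ lam 3 1 (by omega)]
      unfold Ae
      rw [AIe_10 k (2*h) ((1+θ₁)/2) ((1+θ₂)/2),
          ABe_10 k (2*h) ((1+θ₁)/2),
          ABe_01 k (2*h) ((1+θ₁)/2),
          Alame_10 k lam ((1+θ₁)/2)]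
      field_simp
      try ring
    -- case 4 : a = 1, b = 1
    · norm_num [Phi]
      rw [Gz_11 (2*k) h θ₁ θ₂ lam (by omega),
          Gz_off1 (2*k) h θ₁ θ₂ lam 1 2 (by omega) (by omega) (by omega),
          Gz_far (2*k) h θ₁ θ₂ lam 1 3 (by omega),
          Gz_off2 (2*k) h θ₁ θ₂ lam 2 1 (by omega) (by omega) (by omega),
          Gz_diag (2*k) h θ₁ θ₂ lam 2 2 (by omega) (by omega) rfl,
          Gz_off1 (2*k) h θ₁ θ₂ lam 2 3 (by omega) (by omega) (by omega),
          Gz_far (2*k) h θ₁ θ₂ lam 3 1 (by omega),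
          Gz_off2 (2*k) h θ₁ θ₂ lam 3 2 (by omega) (by omega) (by omega),
          Gz_diag (2*k) h θ₁ θ₂ lam 3 3 (by omega) (by omega) rfl]
      unfold Ae
      rw [AIe_11 k (2*h) ((1+θ₁)/2) ((1+θ₂)/2),
          ABe_11 k (2*h) ((1+θ₁)/2),
          Alame_11 k lam ((1+θ₁)/2)]
      field_simp
      try ring
    -- case 5 : a = 1, b = 2
    · norm_num [Phi]
      rw [Gz_far (2*k) h θ₁ θ₂ lam 1 3 (by omega),
          Gz_far (2*k) h θ₁ θ₂ lam 1 4 (by omega),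
          Gz_far (2*k) h θ₁ θ₂ lam 1 5 (by omega),
          Gz_off1 (2*k) h θ₁ θ₂ lam 2 3 (by omega) (by omega) (by omega),
          Gz_far (2*k) h θ₁ θ₂ lam 2 4 (by omega),
          Gz_far (2*k) h θ₁ θ₂ lam 2 5 (by omega),
          Gz_diag (2*k) h θ₁ θ₂ lam 3 3 (by omega) (by omega) rfl,
          Gz_off1 (2*k) h θ₁ θ₂ lam 3 4 (by omega) (by omega) (by omega),
          Gz_far (2*k) h θ₁ θ₂ lam 3 5 (by omega)]
      unfold Ae
      rw [AIe_off1 k (2*h) ((1+θ₁)/2) ((1+θ₂)/2) 1 2 (by omega) (by omega) (by omega),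
          ABe_zero k (2*h) ((1+θ₁)/2) 1 2 (by omega),
          ABe_zero k (2*h) ((1+θ₁)/2) 2 1 (by omega),
          Alame_zero k lam ((1+θ₁)/2) 1 2 (by omega)]
      field_simp
      try ring
    -- case 6 : a = 2, b = 1
    · norm_num [Phi]
      rw [Gz_far (2*k) h θ₁ θ₂ lam 3 1 (by omega),
          Gz_off2 (2*k) h θ₁ θ₂ lam 3 2 (by omega) (by omega) (by omega),
          Gz_diag (2*k) h θ₁ θ₂ lam 3 3 (by omega) (by omega) rfl,
          Gz_far (2*k) h θ₁ θ₂ lam 4 1 (by omega),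
          Gz_far (2*k) h θ₁ θ₂ lam 4 2 (by omega),
          Gz_off2 (2*k) h θ₁ θ₂ lam 4 3 (by omega) (by omega) (by omega),
          Gz_far (2*k) h θ₁ θ₂ lam 5 1 (by omega),
          Gz_far (2*k) h θ₁ θ₂ lam 5 2 (by omega),
          Gz_far (2*k) h θ₁ θ₂ lam 5 3 (by omega)]
      unfold Ae
      rw [AIe_off2 k (2*h) ((1+θ₁)/2) ((1+θ₂)/2) 2 1 (by omega) (by omega) (by omega),
          ABe_zero k (2*h) ((1+θ₁)/2) 2 1 (by omega),
          ABe_zero k (2*h) ((1+θ₁)/2) 1 2 (by omega),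
          Alame_zero k lam ((1+θ₁)/2) 2 1 (by omega)]
      field_simp
      try ring
    -- case 7 : b = a, interior
    · obtain rfl : a = b := hba.symm
      have ha0 : 0 < a := by omega
      simp only [Phi, if_pos ha0]
      rw [Gz_diag (2*k) h θ₁ θ₂ lam (2*a-1) (2*a-1) (by omega) (by omega) rfl,
          Gz_off1 (2*k) h θ₁ θ₂ lam (2*a-1) (2*a) (by omega) (by omega) (by omega),
          Gz_far (2*k) h θ₁ θ₂ lam (2*a-1) (2*a+1) (by omega),
          Gz_off2 (2*k) h θ₁ θ₂ lam (2*a) (2*a-1) (by omega) (by omega) (by omega),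
          Gz_diag (2*k) h θ₁ θ₂ lam (2*a) (2*a) (by omega) (by omega) rfl,
          Gz_off1 (2*k) h θ₁ θ₂ lam (2*a) (2*a+1) (by omega) (by omega) rfl,
          Gz_far (2*k) h θ₁ θ₂ lam (2*a+1) (2*a-1) (by omega),
          Gz_off2 (2*k) h θ₁ θ₂ lam (2*a+1) (2*a) (by omega) (by omega) rfl,
          Gz_diag (2*k) h θ₁ θ₂ lam (2*a+1) (2*a+1) (by omega) (by omega) rfl]
      unfold Ae
      rw [AIe_diag k (2*h) ((1+θ₁)/2) ((1+θ₂)/2) a a (by omega) (by omega) rfl,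
          ABe_zero k (2*h) ((1+θ₁)/2) a a (by omega),
          Alame_zero k lam ((1+θ₁)/2) a a (by omega)]
      field_simp
      try ring
    -- case 8 : b = a + 1, interior
    · have ha0 : 0 < a := by omega
      have hb0 : 0 < b := by omega
      simp only [Phi, if_pos ha0, if_pos hb0]
      rw [Gz_far (2*k) h θ₁ θ₂ lam (2*a-1) (2*b-1) (by omega),
          Gz_far (2*k) h θ₁ θ₂ lam (2*a-1) (2*b) (by omega),
          Gz_far (2*k) h θ₁ θ₂ lam (2*a-1) (2*b+1) (by omega),
          Gz_off1 (2*k) h θ₁ θ₂ lam (2*a) (2*b-1) (by omega) (by omega) (by omega),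
          Gz_far (2*k) h θ₁ θ₂ lam (2*a) (2*b) (by omega),
          Gz_far (2*k) h θ₁ θ₂ lam (2*a) (2*b+1) (by omega),
          Gz_diag (2*k) h θ₁ θ₂ lam (2*a+1) (2*b-1) (by omega) (by omega) (by omega),
          Gz_off1 (2*k) h θ₁ θ₂ lam (2*a+1) (2*b) (by omega) (by omega) (by omega),
          Gz_far (2*k) h θ₁ θ₂ lam (2*a+1) (2*b+1) (by omega)]
      unfold Ae
      rw [AIe_off1 k (2*h) ((1+θ₁)/2) ((1+θ₂)/2) a b (by omega) (by omega) (by omega),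
          ABe_zero k (2*h) ((1+θ₁)/2) a b (by omega),
          ABe_zero k (2*h) ((1+θ₁)/2) b a (by omega),
          Alame_zero k lam ((1+θ₁)/2) a b (by omega)]
      field_simp
      try ring
    -- case 9 : a = b + 1, interior
    · have ha0 : 0 < a := by omega
      have hb0 : 0 < b := by omega
      simp only [Phi, if_pos ha0, if_pos hb0]
      rw [Gz_far (2*k) h θ₁ θ₂ lam (2*a-1) (2*b-1) (by omega),
          Gz_off2 (2*k) h θ₁ θ₂ lam (2*a-1) (2*b) (by omega) (by omega) (by omega),
          Gz_diag (2*k) h θ₁ θ₂ lam (2*a-1) (2*b+1) (by omega) (by omega) (by omega),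
          Gz_far (2*k) h θ₁ θ₂ lam (2*a) (2*b-1) (by omega),
          Gz_far (2*k) h θ₁ θ₂ lam (2*a) (2*b) (by omega),
          Gz_off2 (2*k) h θ₁ θ₂ lam (2*a) (2*b+1) (by omega) (by omega) (by omega),
          Gz_far (2*k) h θ₁ θ₂ lam (2*a+1) (2*b-1) (by omega),
          Gz_far (2*k) h θ₁ θ₂ lam (2*a+1) (2*b) (by omega),
          Gz_far (2*k) h θ₁ θ₂ lam (2*a+1) (2*b+1) (by omega)]
      unfold Ae
      rw [AIe_off2 k (2*h) ((1+θ₁)/2) ((1+θ₂)/2) a b (by omega) (by omega) (by omega),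
          ABe_zero k (2*h) ((1+θ₁)/2) a b (by omega),
          ABe_zero k (2*h) ((1+θ₁)/2) b a (by omega),
          Alame_zero k lam ((1+θ₁)/2) a b (by omega)]
      field_simp
      try ring
    -- case 10 : a = k - 1, b = k - 1
    · obtain rfl : a = b := by omega
      have ha0 : 0 < a := by omega
      simp only [Phi, if_pos ha0]
      rw [Gz_diag (2*k) h θ₁ θ₂ lam (2*a-1) (2*a-1) (by omega) (by omega) rfl,
          Gz_off1 (2*k) h θ₁ θ₂ lam (2*a-1) (2*a) (by omega) (by omega) (by omega),
          Gz_far (2*k) h θ₁ θ₂ lam (2*a-1) (2*a+1) (by omega),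
          Gz_off2 (2*k) h θ₁ θ₂ lam (2*a) (2*a-1) (by omega) (by omega) (by omega),
          Gz_diag (2*k) h θ₁ θ₂ lam (2*a) (2*a) (by omega) (by omega) rfl,
          Gz_off1 (2*k) h θ₁ θ₂ lam (2*a) (2*a+1) (by omega) (by omega) rfl,
          Gz_far (2*k) h θ₁ θ₂ lam (2*a+1) (2*a-1) (by omega),
          Gz_off2 (2*k) h θ₁ θ₂ lam (2*a+1) (2*a) (by omega) (by omega) rfl,
          Gz_mm (2*k) h θ₁ θ₂ lam (2*a+1) (2*a+1) (by omega) (by omega) rfl]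
      unfold Ae
      rw [AIe_mm k (2*h) ((1+θ₁)/2) ((1+θ₂)/2) a a (by omega) (by omega) rfl,
          ABe_zero k (2*h) ((1+θ₁)/2) a a (by omega),
          Alame_zero k lam ((1+θ₁)/2) a a (by omega)]
      field_simp
      try ring
    -- case 11 : a = k - 1, b = k
    · obtain rfl : k = b := hb11.symm
      have ha0 : 0 < a := by omega
      have hb0 : 0 < k := by omega
      simp only [Phi, if_pos ha0, if_pos hb0]
      rw [Gz_far (2*k) h θ₁ θ₂ lam (2*a-1) (2*k-1) (by omega),
          Gz_far (2*k) h θ₁ θ₂ lam (2*a-1) (2*k) (by omega),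
          Gz_far (2*k) h θ₁ θ₂ lam (2*a-1) (2*k+1) (by omega),
          Gz_off1 (2*k) h θ₁ θ₂ lam (2*a) (2*k-1) (by omega) (by omega) (by omega),
          Gz_far (2*k) h θ₁ θ₂ lam (2*a) (2*k) (by omega),
          Gz_far (2*k) h θ₁ θ₂ lam (2*a) (2*k+1) (by omega),
          Gz_mm (2*k) h θ₁ θ₂ lam (2*a+1) (2*k-1) (by omega) (by omega) (by omega),
          Gz_mn (2*k) h θ₁ θ₂ lam (2*a+1) (2*k) (by omega) (by omega) (by omega),
          Gz_big (2*k) h θ₁ θ₂ lam (2*a+1) (2*k+1) (by omega)]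
      unfold Ae
      rw [AIe_mn k (2*h) ((1+θ₁)/2) ((1+θ₂)/2) a k (by omega) (by omega) (by omega),
          ABe_zero k (2*h) ((1+θ₁)/2) a k (by omega),
          ABe_zero k (2*h) ((1+θ₁)/2) k a (by omega),
          Alame_zero k lam ((1+θ₁)/2) a k (by omega)]
      field_simp
      try ring
    -- case 12 : a = k, b = k - 1
    · obtain rfl : k = a := ha12.symm
      have ha0 : 0 < k := by omega
      have hb0 : 0 < b := by omega
      rw [Phi_big (2*k) h θ₁ θ₂ lam b (2*k+1) (by omega)]
      simp only [Phi, if_pos ha0, if_pos hb0]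
      rw [Gz_far (2*k) h θ₁ θ₂ lam (2*k-1) (2*b-1) (by omega),
          Gz_off2 (2*k) h θ₁ θ₂ lam (2*k-1) (2*b) (by omega) (by omega) (by omega),
          Gz_mm (2*k) h θ₁ θ₂ lam (2*k-1) (2*b+1) (by omega) (by omega) (by omega),
          Gz_far (2*k) h θ₁ θ₂ lam (2*k) (2*b-1) (by omega),
          Gz_far (2*k) h θ₁ θ₂ lam (2*k) (2*b) (by omega),
          Gz_nm (2*k) h θ₁ θ₂ lam (2*k) (2*b+1) (by omega) (by omega) (by omega)]
      unfold Ae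
      rw [AIe_nm k (2*h) ((1+θ₁)/2) ((1+θ₂)/2) k b (by omega) (by omega) (by omega),
          ABe_zero k (2*h) ((1+θ₁)/2) k b (by omega),
          ABe_zero k (2*h) ((1+θ₁)/2) b k (by omega),
          Alame_zero k lam ((1+θ₁)/2) k b (by omega)]
      field_simp
      try ring
    -- case 13 : a = k, b = k
    · obtain rfl : k = a := ha13.symm
      obtain rfl : k = b := hb13.symm
      have ha0 : 0 < k := by omega
      rw [Phi_big (2*k) h θ₁ θ₂ lam k (2*k+1) (by omega)]
      simp only [Phi, if_pos ha0]
      rw [Gz_mm (2*k) h θ₁ θ₂ lam (2*k-1) (2*k-1) (by omega) (by omega) rfl,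
          Gz_mn (2*k) h θ₁ θ₂ lam (2*k-1) (2*k) (by omega) (by omega) (by omega),
          Gz_big (2*k) h θ₁ θ₂ lam (2*k-1) (2*k+1) (by omega),
          Gz_nm (2*k) h θ₁ θ₂ lam (2*k) (2*k-1) (by omega) (by omega) (by omega),
          Gz_nn (2*k) h θ₁ θ₂ lam (2*k) (2*k) (by omega) (by omega) (by omega),
          Gz_big (2*k) h θ₁ θ₂ lam (2*k) (2*k+1) (by omega)]
      unfold Ae
      rw [AIe_nn k (2*h) ((1+θ₁)/2) ((1+θ₂)/2) k k (by omega) (by omega) (by omega),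
          ABe_zero k (2*h) ((1+θ₁)/2) k k (by omega),
          Alame_zero k lam ((1+θ₁)/2) k k (by omega)]
      field_simp
      try ring

/-- The full 1D ghost-FEM matrix `A = A^I + A^B + (A^B)ᵀ + A^λ`. -/
noncomputable def Afull (n : ℕ) (h θ₁ θ₂ lam : ℝ) : Matrix (Fin (n + 1)) (Fin (n + 1)) ℝ :=
  AI n h θ₁ θ₂ + AB n h θ₁ + (AB n h θ₁)ᵀ + Alam n lam θ₁

/-- The Galerkin coarse-grid operator `𝓘 A 𝓘ᵀ` equals the 1D ghost-FEM matrix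
assembled directly on the coarse grid of step `2h` with cut fractions
`(1+θ₁)/2` and `(1+θ₂)/2` and the same stabilization parameter `λ`. -/
theorem galerkin_eq_direct_assembly (n : ℕ) (hn : Even n) (hn8 : 8 ≤ n)
    (h θ₁ θ₂ lam : ℝ) (hh : 0 < h)
    (hθ₁ : θ₁ ∈ Set.Ioc (0 : ℝ) 1) (hθ₂ : θ₂ ∈ Set.Ioc (0 : ℝ) 1) :
    restrict n * Afull n h θ₁ θ₂ lam * (restrict n)ᵀ
      = Afull (n / 2) (2 * h) ((1 + θ₁) / 2) ((1 + θ₂) / 2) lam := by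
  have hne : h ≠ 0 := ne_of_gt hh
  have he : n % 2 = 0 := Nat.even_iff.mp hn
  have hn2 : n = 2 * (n / 2) := by omega
  have hk4 : 4 ≤ n / 2 := by omega
  ext i j
  rw [Matrix.mul_assoc, Matrix.mul_apply]
  have hF : ∀ x : Fin (n + 1), Phi n h θ₁ θ₂ lam (j : ℕ) (x : ℕ)
      = (Afull n h θ₁ θ₂ lam * (restrict n)ᵀ) x j := by
    intro x
    have hF' : ∀ bb : Fin (n + 1), Gz n h θ₁ θ₂ lam (x : ℕ) (bb : ℕ)
        = Afull n h θ₁ θ₂ lam x bb := by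
      intro bb
      unfold Gz
      rw [if_pos ⟨Nat.lt_succ_iff.mp x.isLt, Nat.lt_succ_iff.mp bb.isLt⟩]
      rfl
    have h1 : ∀ bb : Fin (n + 1), Afull n h θ₁ θ₂ lam x bb * (restrict n)ᵀ bb j
        = restrict n j bb * Afull n h θ₁ θ₂ lam x bb := fun bb => mul_comm _ _
    rw [Matrix.mul_apply, Finset.sum_congr rfl (fun bb _ => h1 bb),
        sum_restrict n j (fun bb => Afull n h θ₁ θ₂ lam x bb)
          (fun y => Gz n h θ₁ θ₂ lam (x : ℕ) y) hF'
          (fun s hs => Gz_big n h θ₁ θ₂ lam (x : ℕ) s (Or.inr hs))]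
    rfl
  have hF0 : ∀ s, n < s → Phi n h θ₁ θ₂ lam (j : ℕ) s = 0 :=
    fun s hs => Phi_big n h θ₁ θ₂ lam (j : ℕ) s hs
  exact (sum_restrict n i (fun x => (Afull n h θ₁ θ₂ lam * (restrict n)ᵀ) x j)
      (Phi n h θ₁ θ₂ lam (j : ℕ)) hF hF0).trans
    (core n (n / 2) hn2 hk4 h θ₁ θ₂ lam hne (i : ℕ) (j : ℕ)
      (Nat.lt_succ_iff.mp i.isLt) (Nat.lt_succ_iff.mp j.isLt))
end

section
/- Let C > 0 and λ > C be real numbers. Then there exists a constant C̃ > 0 such that for all real numbers G, p, q with G ≥ 0 and q² ≤ C·G, one has G + λp² − 2pq ≥ C̃·(G + λp²). In particular, if the stabilization parameter λ exceeds the trace constant C, the Nitsche bilinear form is coercive with respect to the norm whose square is G + λp². -/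
/-- Coercivity of the Nitsche bilinear form: if the stabilization parameter `λ`
exceeds the trace constant `C`, then there is `C̃ > 0` with
`G + λp² - 2pq ≥ C̃(G + λp²)` whenever `G ≥ 0` and `q² ≤ C·G`. -/
theorem nitsche_coercive (C lam : ℝ) (hC : 0 < C) (hlam : C < lam) :
    ∃ Ctil : ℝ, 0 < Ctil ∧
      ∀ G p q : ℝ, 0 ≤ G → q ^ 2 ≤ C * G →
        G + lam * p ^ 2 - 2 * p * q ≥ Ctil * (G + lam * p ^ 2) := by
  have hlam0 : 0 < lam := hC.trans hlam
  refine ⟨(lam - C) / (2 * lam), div_pos (by linarith) (by positivity), ?_⟩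
  intro G p q hG hq
  rw [ge_iff_le, div_mul_eq_mul_div, div_le_iff₀ (by positivity)]
  nlinarith [mul_nonneg hlam0.le (sq_nonneg ((lam + C) * p - 2 * q)),
    mul_nonneg hG (sq_nonneg (lam - C)), hq, hlam0]
end

section
/- (Sharpness of the trace constant.) Let n ≥ 2 be an integer, h > 0 and θ₁, θ₂ ∈ (0,1]. If C' is a real number such that ((u₁ − u₀)/h)² ≤ C' · [ θ₁(u₁ − u₀)²/h + Σ_{i=1}^{n−2} (u_{i+1} − u_i)²/h + θ₂(u_n − u_{n−1})²/h ] holds for all real u₀, u₁, …, u_n, then C' ≥ 1/(θ₁h). Hence 1/(θ₁h) is the smallest admissible trace constant, attained for example at (u₀, u₁, …, u_n) = (1, 0, …, 0). -/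
/-- Sharpness of the trace constant: any constant `C'` valid in the discrete
trace inequality for all nodal values satisfies `C' ≥ 1/(θ₁h)`. -/
theorem trace_constant_sharp (n : ℕ) (hn : 2 ≤ n) (h θ₁ θ₂ : ℝ)
    (hh : 0 < h) (hθ₁ : θ₁ ∈ Set.Ioc (0 : ℝ) 1) (hθ₂ : θ₂ ∈ Set.Ioc (0 : ℝ) 1)
    (C' : ℝ)
    (hC' : ∀ u : ℕ → ℝ,
      ((u 1 - u 0) / h) ^ 2
        ≤ C' *
            (θ₁ * (u 1 - u 0) ^ 2 / h
              + ∑ i ∈ Finset.Icc 1 (n - 2), (u (i + 1) - u i) ^ 2 / h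
              + θ₂ * (u n - u (n - 1)) ^ 2 / h)) :
    C' ≥ 1 / (θ₁ * h) := by
  have key := hC' (fun i => if i = 0 then 1 else 0)
  have h1 : (1 : ℕ) ≠ 0 := one_ne_zero
  have hn0 : n ≠ 0 := by omega
  have hn1 : n - 1 ≠ 0 := by omega
  have hsum : ∑ i ∈ Finset.Icc 1 (n - 2),
      ((if i + 1 = 0 then (1:ℝ) else 0) - (if i = 0 then 1 else 0)) ^ 2 / h = 0 := by
    apply Finset.sum_eq_zero
    intro i hi
    rw [Finset.mem_Icc] at hi
    rw [if_neg (by omega : i + 1 ≠ 0), if_neg (by omega : i ≠ 0)]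
    ring
  simp only [if_true, if_neg h1, if_neg hn0, if_neg hn1] at key
  rw [hsum] at key
  have hθ : 0 < θ₁ := hθ₁.1
  have hkey : 1 / h ^ 2 ≤ C' * (θ₁ / h) := by
    have e1 : ((0 - (1:ℝ)) / h) ^ 2 = 1 / h ^ 2 := by field_simp; norm_num
    have e2 : C' * (θ₁ * (0 - (1:ℝ)) ^ 2 / h + 0 + θ₂ * (0 - 0) ^ 2 / h) = C' * (θ₁ / h) := by
      ring
    rw [e1, e2] at key
    exact key
  rw [ge_iff_le, div_le_iff₀ (mul_pos hθ hh)]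
  rw [div_le_iff₀ (by positivity : (0:ℝ) < h ^ 2)] at hkey
  have heq : C' * (θ₁ / h) * h ^ 2 = C' * (θ₁ * h) := by
    field_simp
  linarith [hkey, heq.symm ▸ hkey]
end

section
/- (Exact positive-definiteness threshold for the 1D ghost-FEM stiffness matrix.) Let n ≥ 2 be an integer, h > 0, θ₁, θ₂ ∈ (0,1] and λ ∈ ℝ. Define the quadratic form Q on ℝ^{n+1} by Q(u) = θ₁(u₁ − u₀)²/h + Σ_{i=1}^{n−2} (u_{i+1} − u_i)²/h + θ₂(u_n − u_{n−1})²/h + 2·(θ₁u₀ + (1−θ₁)u₁)·(u₁ − u₀)/h + λ·(θ₁u₀ + (1−θ₁)u₁)². Then Q(u) > 0 for every nonzero u ∈ ℝ^{n+1} if and only if λ·θ₁·h > 1. -/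
/-- Exact positive-definiteness threshold for the 1D ghost-FEM stiffness matrix:
the quadratic form `Q(u) = ∫(v')² - 2v(a)(n·∇v)(a) + λv(a)²` is positive on all
nonzero `u ∈ ℝ^{n+1}` if and only if `λθ₁h > 1`. -/
theorem ghost_fem_posdef_iff (n : ℕ) (hn : 2 ≤ n) (h θ₁ θ₂ lam : ℝ)
    (hh : 0 < h) (hθ₁ : θ₁ ∈ Set.Ioc (0 : ℝ) 1) (hθ₂ : θ₂ ∈ Set.Ioc (0 : ℝ) 1) :
    (∀ u : Fin (n + 1) → ℝ, u ≠ 0 →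
        0 < θ₁ * (u 1 - u 0) ^ 2 / h
            + (∑ i ∈ Finset.univ.filter (fun i : Fin (n + 1) =>
                  1 ≤ (i : ℕ) ∧ (i : ℕ) ≤ n - 2), (u (i + 1) - u i) ^ 2 / h)
            + θ₂ * (u (Fin.last n) - u ⟨n - 1, by omega⟩) ^ 2 / h
            + 2 * (θ₁ * u 0 + (1 - θ₁) * u 1) * (u 1 - u 0) / h
            + lam * (θ₁ * u 0 + (1 - θ₁) * u 1) ^ 2)
      ↔ 1 < lam * θ₁ * h := by
  obtain ⟨hθ₁0, hθ₁1⟩ := hθ₁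
  obtain ⟨hθ₂0, hθ₂1⟩ := hθ₂
  have hval1 : ((1 : Fin (n+1)) : ℕ) = 1 := by
    rw [Fin.val_one', Nat.mod_eq_of_lt (by omega)]
  have hadd : ∀ (k : ℕ) (hk : k + 1 ≤ n),
      (⟨k, by omega⟩ : Fin (n+1)) + 1 = ⟨k+1, by omega⟩ := by
    intro k hk
    apply Fin.ext
    rw [Fin.val_add, Fin.val_one']
    simp
    omega
  constructor
  · intro H
    set u : Fin (n+1) → ℝ := fun i => if i = 0 then 1 else 0 with hu
    have hu0 : u 0 = 1 := by simp [hu]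
    have h1ne : (1 : Fin (n+1)) ≠ 0 := by
      intro hc
      have := congrArg (Fin.val) hc
      rw [hval1] at this
      simp at this
    have hu1 : u 1 = 0 := by simp [hu, h1ne]
    have hune : u ≠ 0 := by
      intro h0
      have : u 0 = 0 := by rw [h0]; rfl
      rw [hu0] at this; norm_num at this
    have hQ := H u hune
    have hzero : ∀ i : Fin (n+1), (i : ℕ) ≠ 0 → u i = 0 := by
      intro i hi
      simp only [hu]
      rw [if_neg]
      intro hc
      exact hi (by rw [hc]; rfl)
    have hsum : (∑ i ∈ Finset.univ.filter (fun i : Fin (n + 1) =>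
          1 ≤ (i : ℕ) ∧ (i : ℕ) ≤ n - 2), (u (i + 1) - u i) ^ 2 / h) = 0 := by
      apply Finset.sum_eq_zero
      intro i hi
      simp only [Finset.mem_filter] at hi
      obtain ⟨-, hi1, hi2⟩ := hi
      have hiv : u i = 0 := hzero i (by omega)
      have hival : ((i + 1 : Fin (n+1)) : ℕ) = (i : ℕ) + 1 := by
        rw [Fin.val_add, hval1, Nat.mod_eq_of_lt (by omega)]
      have hiv1 : u (i + 1) = 0 := hzero _ (by rw [hival]; omega)
      rw [hiv, hiv1]
      ring
    have hlast : u (Fin.last n) = 0 := hzero _ (by simp [Fin.last]; omega)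
    have hpre : u ⟨n - 1, by omega⟩ = 0 := hzero _ (by simp; omega)
    rw [hsum, hlast, hpre, hu0, hu1] at hQ
    have hQ' : 0 < lam * θ₁ ^ 2 - θ₁ / h := by
      ring_nf at hQ ⊢
      linarith
    have h2 : 0 < lam * θ₁ ^ 2 * h - θ₁ := by
      have h3 := mul_pos hQ' hh
      have h4 : (lam * θ₁ ^ 2 - θ₁ / h) * h = lam * θ₁ ^ 2 * h - θ₁ := by
        field_simp
      linarith [h4 ▸ h3]
    nlinarith [h2, hθ₁0]
  · intro hlam u hune
    by_contra hQ
    push_neg at hQ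
    have hθh : 0 < θ₁ * h := mul_pos hθ₁0 hh
    have hc : 0 < lam - 1 / (θ₁ * h) := by
      rw [sub_pos, div_lt_iff₀ hθh]
      linarith [hlam]
    set v : ℝ := θ₁ * u 0 + (1 - θ₁) * u 1 with hv
    have hid : θ₁ * (u 1 - u 0) ^ 2 / h + 2 * v * (u 1 - u 0) / h + lam * v ^ 2
        = (u 1) ^ 2 / (θ₁ * h) + (lam - 1 / (θ₁ * h)) * v ^ 2 := by
      rw [hv]
      field_simp
      ring
    have hA : 0 ≤ (u 1) ^ 2 / (θ₁ * h) := div_nonneg (sq_nonneg _) hθh.le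
    have hB : 0 ≤ (lam - 1 / (θ₁ * h)) * v ^ 2 := mul_nonneg hc.le (sq_nonneg _)
    have hSnn : ∀ i ∈ Finset.univ.filter (fun i : Fin (n + 1) =>
          1 ≤ (i : ℕ) ∧ (i : ℕ) ≤ n - 2), 0 ≤ (u (i + 1) - u i) ^ 2 / h :=
      fun i _ => div_nonneg (sq_nonneg _) hh.le
    have hS : 0 ≤ ∑ i ∈ Finset.univ.filter (fun i : Fin (n + 1) =>
          1 ≤ (i : ℕ) ∧ (i : ℕ) ≤ n - 2), (u (i + 1) - u i) ^ 2 / h :=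
      Finset.sum_nonneg hSnn
    have hT : 0 ≤ θ₂ * (u (Fin.last n) - u ⟨n - 1, by omega⟩) ^ 2 / h :=
      div_nonneg (mul_nonneg hθ₂0.le (sq_nonneg _)) hh.le
    -- each piece must vanish
    have hA0 : (u 1) ^ 2 / (θ₁ * h) = 0 := by linarith
    have hB0 : (lam - 1 / (θ₁ * h)) * v ^ 2 = 0 := by linarith
    have hS0 : (∑ i ∈ Finset.univ.filter (fun i : Fin (n + 1) =>
          1 ≤ (i : ℕ) ∧ (i : ℕ) ≤ n - 2), (u (i + 1) - u i) ^ 2 / h) = 0 := by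
      linarith
    have hT0 : θ₂ * (u (Fin.last n) - u ⟨n - 1, by omega⟩) ^ 2 / h = 0 := by
      linarith
    have hu1 : u 1 = 0 := by
      have := (div_eq_zero_iff.mp hA0).resolve_right (by linarith)
      exact pow_eq_zero_iff (by norm_num) |>.mp this
    have hv0 : v = 0 := by
      have : v ^ 2 = 0 := by
        rcases mul_eq_zero.mp hB0 with h' | h'
        · linarith
        · exact h'
      exact pow_eq_zero_iff (by norm_num) |>.mp this
    have hu0 : u 0 = 0 := by
      rw [hv, hu1] at hv0
      have : θ₁ * u 0 = 0 := by linarith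
      rcases mul_eq_zero.mp this with h' | h'
      · linarith
      · exact h'
    have hSz := (Finset.sum_eq_zero_iff_of_nonneg hSnn).mp hS0
    have hstep : ∀ (k : ℕ) (_hk1 : 1 ≤ k) (_hk2 : k ≤ n - 2),
        u (⟨k, by omega⟩ + 1) = u ⟨k, by omega⟩ := by
      intro k hk1 hk2
      have hmem : (⟨k, by omega⟩ : Fin (n+1)) ∈ Finset.univ.filter
          (fun i : Fin (n + 1) => 1 ≤ (i : ℕ) ∧ (i : ℕ) ≤ n - 2) := by
        simp [Finset.mem_filter]
        omega
      have := hSz _ hmem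
      have h2 : (u ((⟨k, by omega⟩ : Fin (n+1)) + 1) - u ⟨k, by omega⟩) ^ 2 = 0 := by
        rcases div_eq_zero_iff.mp this with h' | h'
        · exact h'
        · linarith
      have := pow_eq_zero_iff (n := 2) (by norm_num) |>.mp h2
      linarith
    have hlasteq : u (Fin.last n) = u ⟨n - 1, by omega⟩ := by
      have h2 : (u (Fin.last n) - u ⟨n - 1, by omega⟩) ^ 2 = 0 := by
        rcases div_eq_zero_iff.mp hT0 with h' | h'
        · rcases mul_eq_zero.mp h' with h'' | h''
          · linarith
          · exact h''
        · linarith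
      have := pow_eq_zero_iff (n := 2) (by norm_num) |>.mp h2
      linarith
    have key : ∀ (k : ℕ) (_hkn : k ≤ n), u ⟨k, by omega⟩ = 0 := by
      intro k
      induction k using Nat.strong_induction_on with
      | _ k ih =>
        intro hkn
        by_cases hk0 : k = 0
        · subst hk0
          exact hu0
        by_cases hk1 : k = 1
        · subst hk1
          have h1 : (⟨1, by omega⟩ : Fin (n+1)) = 1 := by
            apply Fin.ext
            rw [hval1]
          rw [h1]
          exact hu1
        by_cases hkl : k = n
        · have h1 : (Fin.last n : Fin (n+1)) = ⟨k, by omega⟩ := by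
            apply Fin.ext
            simp [Fin.last]
            omega
          have h2 : (⟨n - 1, by omega⟩ : Fin (n+1)) = ⟨k - 1, by omega⟩ := by
            apply Fin.ext
            simp
            omega
          rw [← h1, hlasteq, h2]
          exact ih (k - 1) (by omega) (by omega)
        · have hs := hstep (k - 1) (by omega) (by omega)
          rw [hadd (k - 1) (by omega)] at hs
          have h3 : (⟨k - 1 + 1, by omega⟩ : Fin (n+1)) = ⟨k, by omega⟩ := by
            apply Fin.ext
            simp
            omega
          rw [h3] at hs
          rw [hs]
          exact ih (k - 1) (by omega) (by omega)
    apply hune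
    funext i
    have := key i.val (by omega)
    simpa using this
end
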